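/- Fix reals θ > 0, A > 0, and x with |x| < A. For β > 0 let D(β) = −(d/dβ) ln ∫_{−A}^{A} e^{−β|x̂ − x|^θ} dx̂ (this derivative exists for every β > 0). Then lim_{β→∞} β · D(β) = 1/θ. -/

import Mathlib

open Filter

namespace FIEL

noncomputable def φ (θ : ℝ) : ℝ → ℝ := fun t => Real.exp (-(|t| ^ θ))

lemma φcont {θ : ℝ} (hθ : 0 < θ) : Continuous (φ θ) :=
  Real.continuous_exp.comp ((continuous_abs.rpow_const fun _ => Or.inr hθ.le).neg)

lemma φpos (θ t : ℝ) : 0 < φ θ t := Real.exp_pos _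

noncomputable def Φ (θ : ℝ) : ℝ → ℝ := fun s => ∫ t in (0:ℝ)..s, φ θ t

lemma φint {θ : ℝ} (hθ : 0 < θ) (p q : ℝ) : IntervalIntegrable (φ θ) MeasureTheory.volume p q :=
  (φcont hθ).intervalIntegrable p q

lemma Φsub {θ : ℝ} (hθ : 0 < θ) (p q : ℝ) : (∫ t in p..q, φ θ t) = Φ θ q - Φ θ p :=
  (intervalIntegral.integral_interval_sub_left (φint hθ 0 q) (φint hθ 0 p)).symm

lemma Φderiv {θ : ℝ} (hθ : 0 < θ) (s : ℝ) : HasDerivAt (Φ θ) (φ θ s) s :=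
  intervalIntegral.integral_hasDerivAt_right (φint hθ 0 s)
    ((φcont hθ).stronglyMeasurable.stronglyMeasurableAtFilter)
    (φcont hθ).continuousAt

end FIEL

open FIEL

/-- equipartition is exact to first order on a finite
interval.  Fix `θ > 0`, `A > 0` and `|x| < A`.  For `β > 0` the function
`β ↦ ln ∫_{-A}^{A} e^{-β|x̂-x|^θ} dx̂` is differentiable, and if `D(β)` denotes
its negated derivative (the average distortion at inverse temperature `β`),
then `β·D(β) → 1/θ` as `β → ∞`. -/
theorem finite_interval_equipartition_limit
    (θ A x : ℝ) (hθ : 0 < θ) (hA : 0 < A) (hx : |x| < A)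
    (D : ℝ → ℝ)
    (hD : ∀ β : ℝ, 0 < β →
      HasDerivAt (fun b : ℝ => Real.log (∫ y in (-A)..A, Real.exp (-b * |y - x| ^ θ)))
        (-D β) β) :
    (∀ β : ℝ, 0 < β →
      DifferentiableAt ℝ
        (fun b : ℝ => Real.log (∫ y in (-A)..A, Real.exp (-b * |y - x| ^ θ))) β) ∧
    Tendsto (fun β => β * D β) atTop (nhds (1 / θ)) := by
  obtain ⟨hx1, hx2⟩ := abs_lt.mp hx
  set l : ℝ := -A - x with hl
  set r : ℝ := A - x with hr
  have hl0 : l < 0 := by simp [hl]; linarith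
  have hr0 : 0 < r := by simp [hr]; linarith
  -- scaling function
  set c : ℝ → ℝ := fun β => β ^ (1/θ) with hc
  have hcpos : ∀ β : ℝ, 0 < β → 0 < c β := fun β hβ => Real.rpow_pos_of_pos hβ _
  have hcθ : ∀ β : ℝ, 0 < β → (c β) ^ θ = β := by
    intro β hβ
    rw [hc, ← Real.rpow_mul hβ.le, one_div_mul_cancel hθ.ne', Real.rpow_one]
  set H : ℝ → ℝ := fun β => Φ θ (c β * r) - Φ θ (c β * l) with hH
  -- key identity
  have hpowφ : ∀ β : ℝ, 0 < β → ∀ u : ℝ, Real.exp (-β * |u| ^ θ) = φ θ (c β * u) := by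
    intro β hβ u
    have : |c β * u| ^ θ = β * |u| ^ θ := by
      rw [abs_mul, abs_of_pos (hcpos β hβ),
        Real.mul_rpow (hcpos β hβ).le (abs_nonneg u), hcθ β hβ]
    simp only [φ, this, neg_mul]
  have key : ∀ β : ℝ, 0 < β →
      (∫ y in (-A)..A, Real.exp (-β * |y - x| ^ θ)) = (c β)⁻¹ * H β := by
    intro β hβ
    have h1 : (∫ y in (-A)..A, Real.exp (-β * |y - x| ^ θ))
        = ∫ u in l..r, Real.exp (-β * |u| ^ θ) := by
      rw [hl, hr]
      exact intervalIntegral.integral_comp_sub_right (fun u => Real.exp (-β * |u| ^ θ)) x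
    rw [h1]
    have h2 : (∫ u in l..r, Real.exp (-β * |u| ^ θ)) = ∫ u in l..r, φ θ (c β * u) := by
      refine intervalIntegral.integral_congr fun u _ => hpowφ β hβ u
    rw [h2, intervalIntegral.integral_comp_mul_left (φ θ) (hcpos β hβ).ne',
      smul_eq_mul, Φsub hθ]
  -- positivity of H
  have hHpos : ∀ β : ℝ, 0 < β → 0 < H β := by
    intro β hβ
    show 0 < Φ θ (c β * r) - Φ θ (c β * l)
    rw [← Φsub hθ]
    exact intervalIntegral.intervalIntegral_pos_of_pos_on (φint hθ _ _)
      (fun t _ => φpos θ t)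
      (by
        have := hl0.trans hr0
        exact mul_lt_mul_of_pos_left this (hcpos β hβ))
  -- derivative of H
  set e : ℝ → ℝ := fun β =>
    (1/θ) * β ^ (1/θ - 1) * (r * φ θ (c β * r) - l * φ θ (c β * l)) with he
  have hHderiv : ∀ β : ℝ, 0 < β → HasDerivAt H (e β) β := by
    intro β hβ
    have hcder : HasDerivAt c ((1/θ) * β ^ (1/θ - 1)) β :=
      Real.hasDerivAt_rpow_const (Or.inl hβ.ne')
    have h1 : HasDerivAt (fun b => Φ θ (c b * r))
        (φ θ (c β * r) * ((1/θ) * β ^ (1/θ - 1) * r)) β :=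
      by have := (Φderiv hθ (c β * r)).comp β (hcder.mul_const r); exact this
    have h2 : HasDerivAt (fun b => Φ θ (c b * l))
        (φ θ (c β * l) * ((1/θ) * β ^ (1/θ - 1) * l)) β :=
      by have := (Φderiv hθ (c β * l)).comp β (hcder.mul_const l); exact this
    have := h1.sub h2
    refine this.congr_deriv ?_
    simp only [he]; ring
  -- derivative of log Z, explicit form
  have hlogZ : ∀ β : ℝ, 0 < β →
      HasDerivAt (fun b : ℝ => Real.log (∫ y in (-A)..A, Real.exp (-b * |y - x| ^ θ)))
        (-(1/θ) * β⁻¹ + e β / H β) β := by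
    intro β hβ
    have hg : HasDerivAt (fun b : ℝ => -(1/θ) * Real.log b + Real.log (H b))
        (-(1/θ) * β⁻¹ + e β / H β) β := by
      have h1 : HasDerivAt (fun b : ℝ => -(1/θ) * Real.log b) (-(1/θ) * β⁻¹) β :=
        (Real.hasDerivAt_log hβ.ne').const_mul _
      have h2 : HasDerivAt (fun b : ℝ => Real.log (H b)) (e β / H β) β := by
        have := (Real.hasDerivAt_log (hHpos β hβ).ne').comp β (hHderiv β hβ)
        simpa [div_eq_inv_mul, Function.comp_def] using this
      exact h1.add h2
    refine hg.congr_of_eventuallyEq ?_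
    filter_upwards [eventually_gt_nhds hβ] with b hb
    rw [key b hb, Real.log_mul (inv_ne_zero (hcpos b hb).ne') (hHpos b hb).ne',
      Real.log_inv, hc, Real.log_rpow hb]
    ring
  -- identify D
  have hDval : ∀ β : ℝ, 0 < β → D β = (1/θ) * β⁻¹ - e β / H β := by
    intro β hβ
    have := (hD β hβ).unique (hlogZ β hβ)
    linarith
  constructor
  · exact fun β hβ => (hD β hβ).differentiableAt
  -- the limit
  have hβD : ∀ β : ℝ, 0 < β → β * D β = 1/θ - β * e β / H β := by
    intro β hβ
    rw [hDval β hβ]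
    field_simp
  -- β * e β explicit
  have hβe : ∀ β : ℝ, 0 < β → β * e β =
      (1/θ) * (r * (β ^ (1/θ) * Real.exp (-(r ^ θ) * β))
        + (-l) * (β ^ (1/θ) * Real.exp (-(|l| ^ θ) * β))) := by
    intro β hβ
    have hcr : φ θ (c β * r) = Real.exp (-(r ^ θ) * β) := by
      have h1 : |c β * r| ^ θ = β * r ^ θ := by
        rw [abs_mul, abs_of_pos (hcpos β hβ), abs_of_pos hr0,
          Real.mul_rpow (hcpos β hβ).le hr0.le, hcθ β hβ]
      simp only [φ, h1]; congr 1; ring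
    have hcl : φ θ (c β * l) = Real.exp (-(|l| ^ θ) * β) := by
      have h1 : |c β * l| ^ θ = β * |l| ^ θ := by
        rw [abs_mul, abs_of_pos (hcpos β hβ),
          Real.mul_rpow (hcpos β hβ).le (abs_nonneg l), hcθ β hβ]
      simp only [φ, h1]; congr 1; ring
    have hβpow : β * β ^ (1/θ - 1) = β ^ (1/θ) := by
      have h2 := Real.rpow_add hβ 1 (1/θ - 1)
      simp only [Real.rpow_one] at h2
      rw [← h2]; congr 1; ring
    simp only [he, hcr, hcl]
    linear_combination ((1/θ) * (r * Real.exp (-(r ^ θ) * β)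
      - l * Real.exp (-(|l| ^ θ) * β))) * hβpow
  -- tendsto of β * e β
  have hβe0 : Tendsto (fun β => β * e β) atTop (nhds 0) := by
    have t1 : Tendsto (fun β : ℝ => β ^ (1/θ) * Real.exp (-(r ^ θ) * β)) atTop (nhds 0) :=
      tendsto_rpow_mul_exp_neg_mul_atTop_nhds_zero _ _ (Real.rpow_pos_of_pos hr0 θ)
    have t2 : Tendsto (fun β : ℝ => β ^ (1/θ) * Real.exp (-(|l| ^ θ) * β)) atTop (nhds 0) :=
      tendsto_rpow_mul_exp_neg_mul_atTop_nhds_zero _ _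
        (Real.rpow_pos_of_pos (abs_pos.mpr hl0.ne) θ)
    have := (((t1.const_mul r).add (t2.const_mul (-l))).const_mul (1/θ))
    simp only [mul_zero, add_zero, zero_add] at this
    refine (this.congr' ?_)
    filter_upwards [eventually_gt_atTop (0:ℝ)] with β hβ
    rw [hβe β hβ]
  -- H bounded below
  have hH1 : 0 < H 1 := hHpos 1 one_pos
  have hHlb : ∀ β : ℝ, 1 ≤ β → H 1 ≤ H β := by
    intro β hβ
    have hβ0 : (0:ℝ) < β := lt_of_lt_of_le one_pos hβ
    have hc1 : 1 ≤ c β := Real.one_le_rpow hβ (by positivity)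
    have hc1' : c 1 = 1 := by rw [hc]; simp
    show Φ θ (c 1 * r) - Φ θ (c 1 * l) ≤ Φ θ (c β * r) - Φ θ (c β * l)
    rw [← Φsub hθ, ← Φsub hθ, hc1', one_mul, one_mul]
    have h1 : c β * l ≤ 1 * l := by
      apply mul_le_mul_of_nonpos_right hc1 hl0.le
    have h2 : 1 * r ≤ c β * r := mul_le_mul_of_nonneg_right hc1 hr0.le
    rw [one_mul] at h1 h2
    refine intervalIntegral.integral_mono_interval h1 (hl0.trans hr0).le h2 ?_ (φint hθ _ _)
    filter_upwards with t using (φpos θ t).le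
  -- e nonneg
  have heng : ∀ β : ℝ, 0 < β → 0 ≤ β * e β := by
    intro β hβ
    rw [hβe β hβ]
    have h1 : (0:ℝ) ≤ r * (β ^ (1/θ) * Real.exp (-(r ^ θ) * β)) := by positivity
    have h2 : (0:ℝ) ≤ (-l) * (β ^ (1/θ) * Real.exp (-(|l| ^ θ) * β)) := by
      apply mul_nonneg (by linarith) (by positivity)
    positivity
  -- squeeze
  have hsq : Tendsto (fun β => β * e β / H β) atTop (nhds 0) := by
    have hub : Tendsto (fun β => β * e β / H 1) atTop (nhds 0) := by
      simpa using hβe0.div_const (H 1)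
    refine tendsto_of_tendsto_of_tendsto_of_le_of_le' tendsto_const_nhds hub ?_ ?_
    · filter_upwards [eventually_ge_atTop (1:ℝ)] with β hβ
      have hβ0 : (0:ℝ) < β := lt_of_lt_of_le one_pos hβ
      exact div_nonneg (heng β hβ0) (hHpos β hβ0).le
    · filter_upwards [eventually_ge_atTop (1:ℝ)] with β hβ
      have hβ0 : (0:ℝ) < β := lt_of_lt_of_le one_pos hβ
      exact div_le_div_of_nonneg_left (heng β hβ0) hH1 (hHlb β hβ)
  have : Tendsto (fun β => 1/θ - β * e β / H β) atTop (nhds (1/θ)) := by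
    simpa using (tendsto_const_nhds.sub hsq)
  refine this.congr' ?_
  filter_upwards [eventually_gt_atTop (0:ℝ)] with β hβ
  exact (hβD β hβ).symm
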